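/- Let m > 0 and R > 0 be real constants, define V(γ) = (log₂ e)²·(1 − (1+γ)⁻²), the Gaussian Q-function Q(y) = (1/√(2π))·∫_y^∞ exp(−t²/2) dt, and the finite-blocklength BLER Ψ(γ) = Q((log₂(1+γ) − R)/√(V(γ)/m)) for γ > 0. Then Ψ is strictly decreasing on (0, ∞). -/

import Mathlib

open Real MeasureTheory

/-- Channel dispersion `V(γ) = (log₂ e)² · (1 − (1+γ)⁻²)`. -/
noncomputable def Vdisp (γ : ℝ) : ℝ :=
  (Real.logb 2 (Real.exp 1)) ^ 2 * (1 - ((1 + γ)⁻¹) ^ 2)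

/-- Gaussian Q-function `Q(y) = (1/√(2π)) ∫_y^∞ exp(−t²/2) dt`. -/
noncomputable def Qfun (y : ℝ) : ℝ :=
  (1 / Real.sqrt (2 * Real.pi)) * ∫ t in Set.Ioi y, Real.exp (-t ^ 2 / 2)

/-- Finite-blocklength BLER `Ψ(γ) = Q((log₂(1+γ) − R)/√(V(γ)/m))`. -/
noncomputable def Psi (m R γ : ℝ) : ℝ :=
  Qfun ((Real.logb 2 (1 + γ) - R) / Real.sqrt (Vdisp γ / m))

lemma integrable_gauss : Integrable (fun t : ℝ => Real.exp (-t ^ 2 / 2)) := by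
  have := integrable_exp_neg_mul_sq (b := (1/2 : ℝ)) (by norm_num)
  convert this using 2 with t
  ring_nf

lemma qfun_strictAnti : StrictAnti Qfun := by
  intro y₁ y₂ h
  unfold Qfun
  have hpos : 0 < 1 / Real.sqrt (2 * Real.pi) := by positivity
  apply mul_lt_mul_of_pos_left _ hpos
  have hsplit : (Set.Ioc y₁ y₂) ∪ (Set.Ioi y₂) = Set.Ioi y₁ := Set.Ioc_union_Ioi_eq_Ioi h.le
  have hdisj : Disjoint (Set.Ioc y₁ y₂) (Set.Ioi y₂) := Set.Ioc_disjoint_Ioi le_rfl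
  have hi1 : IntegrableOn (fun t : ℝ => Real.exp (-t ^ 2 / 2)) (Set.Ioc y₁ y₂) :=
    integrable_gauss.integrableOn
  have hi2 : IntegrableOn (fun t : ℝ => Real.exp (-t ^ 2 / 2)) (Set.Ioi y₂) :=
    integrable_gauss.integrableOn
  have hun := setIntegral_union hdisj measurableSet_Ioi hi1 hi2
  rw [hsplit] at hun
  rw [hun]
  have hpos2 : 0 < ∫ t in Set.Ioc y₁ y₂, Real.exp (-t ^ 2 / 2) := by
    rw [setIntegral_pos_iff_support_of_nonneg_ae]
    · have hsup : Function.support (fun t : ℝ => Real.exp (-t ^ 2 / 2)) = Set.univ := by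
        ext t; simp [Function.support, (Real.exp_pos _).ne']
      rw [hsup, Set.univ_inter, Real.volume_Ioc]
      simp [h]
    · filter_upwards with t using (Real.exp_pos _).le
    · exact hi1
  linarith

/-- Auxiliary normalized argument `g(γ) = (ln(1+γ) − a)/√(1 − (1+γ)⁻²)`. -/
noncomputable def gaux (a γ : ℝ) : ℝ :=
  (Real.log (1 + γ) - a) / Real.sqrt (1 - ((1 + γ)⁻¹) ^ 2)

lemma w_pos {γ : ℝ} (hγ : 0 < γ) : 0 < 1 - ((1 + γ)⁻¹) ^ 2 := by
  have hx : 1 < 1 + γ := by linarith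
  have h1 : (1 + γ)⁻¹ < 1 := inv_lt_one_of_one_lt₀ hx
  have h0 : 0 < (1 + γ)⁻¹ := by positivity
  nlinarith

lemma gaux_hasDeriv {a γ : ℝ} (hγ : 0 < γ) :
    HasDerivAt (gaux a)
      (((1 - ((1 + γ)⁻¹) ^ 2) * (1 + γ) ^ 2 - Real.log (1 + γ) + a) /
        ((1 + γ) ^ 3 * Real.sqrt (1 - ((1 + γ)⁻¹) ^ 2) ^ 3)) γ := by
  have hx : (0:ℝ) < 1 + γ := by linarith
  have hxne : (1 + γ) ≠ 0 := hx.ne'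
  have hw := w_pos hγ
  have h1 : HasDerivAt (fun γ : ℝ => 1 + γ) 1 γ := (hasDerivAt_id γ).const_add 1
  have hlog : HasDerivAt (fun γ : ℝ => Real.log (1 + γ) - a) (1 / (1 + γ)) γ := by
    have := ((Real.hasDerivAt_log hxne).comp γ h1).sub_const a
    simpa [one_div] using this
  have hinv : HasDerivAt (fun γ : ℝ => (1 + γ)⁻¹) (-1 / (1 + γ) ^ 2) γ := by
    simpa using h1.fun_inv hxne
  have hpow : HasDerivAt (fun γ : ℝ => ((1 + γ)⁻¹) ^ 2)
      (2 * ((1 + γ)⁻¹) ^ 1 * (-1 / (1 + γ) ^ 2)) γ := by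
    simpa [mul_comm] using hinv.fun_pow 2
  have hwd : HasDerivAt (fun γ : ℝ => 1 - ((1 + γ)⁻¹) ^ 2)
      ((2 * ((1 + γ)⁻¹) ^ 1 * (-1 / (1 + γ) ^ 2)) * -1) γ := by
    simpa [mul_comm] using hpow.const_sub 1
  have hsq : HasDerivAt (fun γ : ℝ => Real.sqrt (1 - ((1 + γ)⁻¹) ^ 2))
      ((2 * ((1 + γ)⁻¹) ^ 1 * (-1 / (1 + γ) ^ 2)) * -1 /
        (2 * Real.sqrt (1 - ((1 + γ)⁻¹) ^ 2))) γ := hwd.sqrt hw.ne'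
  have hdiv : HasDerivAt (gaux a) _ γ :=
    hlog.fun_div hsq (by positivity)
  convert hdiv using 1
  have hspos : 0 < Real.sqrt (1 - ((1 + γ)⁻¹) ^ 2) := Real.sqrt_pos.mpr hw
  set s := Real.sqrt (1 - ((1 + γ)⁻¹) ^ 2) with hsdef
  have hs : s ^ 2 = 1 - ((1 + γ)⁻¹) ^ 2 := Real.sq_sqrt hw.le
  rw [← hs]
  field_simp
  ring

lemma gaux_strictMonoOn {a : ℝ} (ha : 0 < a) : StrictMonoOn (gaux a) (Set.Ioi 0) := by
  have key : ∀ γ ∈ Set.Ioi (0:ℝ), HasDerivAt (gaux a)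
      (((1 - ((1 + γ)⁻¹) ^ 2) * (1 + γ) ^ 2 - Real.log (1 + γ) + a) /
        ((1 + γ) ^ 3 * Real.sqrt (1 - ((1 + γ)⁻¹) ^ 2) ^ 3)) γ :=
    fun γ hγ => gaux_hasDeriv hγ
  apply strictMonoOn_of_deriv_pos (convex_Ioi 0)
  · exact fun γ hγ => ((key γ hγ).differentiableAt).continuousAt.continuousWithinAt
  · intro γ hγ
    rw [interior_Ioi] at hγ
    rw [(key γ hγ).deriv]
    have hγ0 : (0:ℝ) < γ := hγ
    have hw := w_pos hγ0
    have hnum : 0 < (1 - ((1 + γ)⁻¹) ^ 2) * (1 + γ) ^ 2 - Real.log (1 + γ) + a := by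
      have h1 : (1 - ((1 + γ)⁻¹) ^ 2) * (1 + γ) ^ 2 = (1 + γ) ^ 2 - 1 := by
        have : (1 + γ) ≠ 0 := by positivity
        field_simp
      have h2 : Real.log (1 + γ) ≤ (1 + γ) - 1 :=
        Real.log_le_sub_one_of_pos (by linarith)
      nlinarith
    have hspos : 0 < Real.sqrt (1 - ((1 + γ)⁻¹) ^ 2) := Real.sqrt_pos.mpr hw
    have hx : (0:ℝ) < 1 + γ := by linarith
    positivity

lemma arg_eq {m R γ : ℝ} (hm : 0 < m) (hγ : 0 < γ) :
    (Real.logb 2 (1 + γ) - R) / Real.sqrt (Vdisp γ / m)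
      = Real.sqrt m * gaux (R * Real.log 2) γ := by
  have hw := w_pos hγ
  have hlog2 : (0:ℝ) < Real.log 2 := Real.log_pos (by norm_num)
  have hc : Real.logb 2 (Real.exp 1) = 1 / Real.log 2 := by
    simp [Real.logb, Real.log_exp]
  have hsqrt : Real.sqrt (Vdisp γ / m)
      = (1 / Real.log 2) * Real.sqrt (1 - ((1 + γ)⁻¹) ^ 2) / Real.sqrt m := by
    rw [Vdisp, hc, Real.sqrt_div (by positivity), Real.sqrt_mul (by positivity),
      Real.sqrt_sq (by positivity)]
  rw [hsqrt, gaux, Real.logb, ← Real.sqrt_mul_self hm.le]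
  have hsm : 0 < Real.sqrt m := Real.sqrt_pos.mpr hm
  have hsw : 0 < Real.sqrt (1 - ((1 + γ)⁻¹) ^ 2) := Real.sqrt_pos.mpr hw
  rw [Real.sqrt_mul_self hm.le]
  rw [mul_div_assoc' (Real.sqrt m)]
  rw [div_eq_div_iff (by positivity) hsw.ne']
  field_simp

/-- The finite-blocklength BLER `Ψ` is strictly decreasing in the SINR on `(0, ∞)`. -/
theorem bler_strictAntiOn (m R : ℝ) (hm : 0 < m) (hR : 0 < R) :
    StrictAntiOn (Psi m R) (Set.Ioi 0) := by
  intro γ₁ hγ₁ γ₂ hγ₂ h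
  have ha : 0 < R * Real.log 2 := mul_pos hR (Real.log_pos (by norm_num))
  have hg : gaux (R * Real.log 2) γ₁ < gaux (R * Real.log 2) γ₂ :=
    gaux_strictMonoOn ha hγ₁ hγ₂ h
  have hsm : 0 < Real.sqrt m := Real.sqrt_pos.mpr hm
  have : Real.sqrt m * gaux (R * Real.log 2) γ₁
      < Real.sqrt m * gaux (R * Real.log 2) γ₂ := by
    exact mul_lt_mul_of_pos_left hg hsm
  unfold Psi
  rw [arg_eq hm hγ₁, arg_eq hm hγ₂]
  exact qfun_strictAnti this
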